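/- Let $\mu>0$, $\gamma\in[1/2,1)$, $T>0$, and define $u^*_t = e^{\mu t}\left[\frac{e^{-2(1-\gamma)\mu t} - e^{-2(1-\gamma)\mu T}}{1 - e^{-2(1-\gamma)\mu T}}\right]^{1/(1-\gamma)}$ for $t\in[0,T]$. Then $u^*$ is differentiable on $[0,T)$ and satisfies, for all $t\in[0,T)$, $\dot u^*_t = \mu u^*_t - \frac{2\mu}{1-e^{-2\mu(1-\gamma)T}} e^{-\mu(1-\gamma)t}\,(u^*_t)^{\gamma}$. -/

import Mathlib

open Real

theorem most_likely_path_ode (μ γ T : ℝ) (hμ : 0 < μ)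
    (hγ : γ ∈ Set.Ico (1/2 : ℝ) 1) (hT : 0 < T)
    (ustar : ℝ → ℝ)
    (hu : ∀ t, ustar t = Real.exp (μ*t) *
      ((Real.exp (-2*(1-γ)*μ*t) - Real.exp (-2*(1-γ)*μ*T)) /
        (1 - Real.exp (-2*(1-γ)*μ*T))) ^ (1/(1-γ))) :
    ∀ t ∈ Set.Ico (0:ℝ) T,
      HasDerivAt ustar
        (μ * ustar t
          - (2*μ / (1 - Real.exp (-2*μ*(1-γ)*T))) * Real.exp (-μ*(1-γ)*t)
            * (ustar t) ^ γ) t := by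
  obtain ⟨hγ1, hγ2⟩ := hγ
  have h1γ : 0 < 1 - γ := by linarith
  set c : ℝ := 2*(1-γ)*μ with hc
  have hcpos : 0 < c := by positivity
  set D : ℝ := 1 - Real.exp (-c*T) with hDdef
  have hD : 0 < D := by
    have : Real.exp (-c*T) < 1 := by
      rw [Real.exp_lt_one_iff]; nlinarith
    simp only [hDdef]; linarith
  set p : ℝ := 1/(1-γ) with hp
  have hfun : ustar = fun s => Real.exp (μ*s) *
      ((Real.exp (-c*s) - Real.exp (-c*T)) / D) ^ p := by
    funext s
    rw [hu s]
    have e1 : -2*(1-γ)*μ*s = -c*s := by ring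
    have e2 : -2*(1-γ)*μ*T = -c*T := by ring
    rw [e1, e2]
  intro t ht
  obtain ⟨ht0, htT⟩ := ht
  set f : ℝ := (Real.exp (-c*t) - Real.exp (-c*T)) / D with hfdef
  have hf : 0 < f := by
    apply div_pos _ hD
    have h1 : -c*T < -c*t := by nlinarith
    linarith [Real.exp_lt_exp.mpr h1]
  have h_exp : HasDerivAt (fun s : ℝ => Real.exp (μ*s)) (Real.exp (μ*t) * μ) t := by
    simpa using ((hasDerivAt_id t).const_mul μ).exp
  have h_inner : HasDerivAt (fun s : ℝ => (Real.exp (-c*s) - Real.exp (-c*T)) / D)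
      ((Real.exp (-c*t) * (-c) - 0) / D) t := by
    simpa using ((((hasDerivAt_id t).const_mul (-c)).exp.sub_const (Real.exp (-c*T)))).div_const D
  have h_pow := h_inner.rpow_const (p := p) (Or.inl hf.ne')
  have h := h_exp.mul h_pow
  rw [hfun]
  convert h using 1
  · rfl
  · rfl
  · rfl
  have hDT : (1 : ℝ) - Real.exp (-2*μ*(1-γ)*T) = D := by
    have : -2*μ*(1-γ)*T = -c*T := by ring
    rw [hDdef, this]
  have hustγ : (Real.exp (μ*t) * f ^ p) ^ γ = Real.exp (μ*t*γ) * f ^ (p - 1) := by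
    rw [Real.mul_rpow (Real.exp_pos _).le (Real.rpow_nonneg hf.le p), ← Real.exp_mul,
      ← Real.rpow_mul hf.le]
    congr 2
    rw [hp]; field_simp; ring
  beta_reduce
  rw [← hfdef, hustγ, hDT]
  have hcp : c * p = 2*μ := by rw [hc, hp]; field_simp
  have hexps : Real.exp (-μ*(1-γ)*t) * Real.exp (μ*t*γ) = Real.exp (μ*t) * Real.exp (-c*t) := by
    rw [← Real.exp_add, ← Real.exp_add]
    congr 1
    rw [hc]; ring
  have key : 2*μ / D * Real.exp (-μ*(1-γ)*t) * (Real.exp (μ*t*γ) * f ^ (p-1))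
      = - (Real.exp (μ*t) * ((Real.exp (-c*t) * (-c) - 0)/D * p * f ^ (p-1))) := by
    clear_value f p D c
    linear_combination (2*μ/D * f^(p-1)) * hexps
      - (Real.exp (μ*t) * Real.exp (-c*t) * f^(p-1) / D) * hcp
  linarith [key]
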